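/- (Comparison of π-weighted and worst-case total variation mixing times) Let 𝒳 have at least two elements and let P be a transition matrix on 𝒳 that is π-reversible (π(x)P(x,y) = π(y)P(y,x) for all x,y), with λ* := max{ |λ| : λ a complex eigenvalue of P, λ ≠ 1 } < 1, γ* := 1 − λ*, and π_min := min_x π(x). Define the π-weighted TV mixing time t̄_mix^{(TV)}(ε,P) := inf{ t > 0 : (1/2)∑_{x,y} π(x)|P^t(x,y) − π(y)| < ε } and the worst-case TV mixing time t_mix^{(TV)}(ε,P) := inf{ t > 0 : max_x (1/2)∑_y |P^t(x,y) − π(y)| < ε }. Then for every ε with 0 < ε < π_min³/4: ((1−γ*)/2) · t_mix^{(TV)}(ε,P) ≤ t̄_mix^{(TV)}(ε,P) ≤ t_mix^{(TV)}(ε,P). -/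

import Mathlib

open Finset

/-- A transition matrix on a finite state space `X`: nonnegative entries, rows sum to one. -/
def IsTransMat {X : Type*} [Fintype X] (M : Matrix X X ℝ) : Prop :=
  (∀ x y, 0 ≤ M x y) ∧ ∀ x, ∑ y, M x y = 1

/-- `μ` is an eigenvalue of the real matrix `P` viewed as a matrix over `ℂ`. -/
def IsEigenvalueC {X : Type*} [Fintype X] [DecidableEq X] (P : Matrix X X ℝ) (μ : ℂ) : Prop :=
  ∃ v : X → ℂ, v ≠ 0 ∧ (P.map fun a => (a : ℂ)).mulVec v = μ • v

section aux
variable {X : Type*} [Fintype X] [DecidableEq X]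

lemma myPow_rowsum (P : Matrix X X ℝ) (hP : IsTransMat P) (t : ℕ) (x : X) :
    ∑ y, (P ^ t) x y = 1 := by
  induction t generalizing x with
  | zero => simp [Matrix.one_apply]
  | succ n ih =>
    simp only [pow_succ, Matrix.mul_apply]
    rw [Finset.sum_comm]
    calc ∑ j, ∑ y, (P ^ n) x j * P j y
        = ∑ j, (P ^ n) x j * ∑ y, P j y := by simp [Finset.mul_sum]
      _ = 1 := by simp [hP.2, ih]

lemma myStat (π : X → ℝ) (P : Matrix X X ℝ) (hP : IsTransMat P)
    (hrev : ∀ x y, π x * P x y = π y * P y x) (t : ℕ) (y : X) :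
    ∑ x, π x * (P ^ t) x y = π y := by
  induction t generalizing y with
  | zero => simp [Matrix.one_apply]
  | succ n ih =>
    simp only [pow_succ, Matrix.mul_apply, Finset.mul_sum]
    rw [Finset.sum_comm]
    calc ∑ j, ∑ x, π x * ((P ^ n) x j * P j y)
        = ∑ j, (∑ x, π x * (P ^ n) x j) * P j y := by
          refine Finset.sum_congr rfl fun j _ => ?_
          rw [Finset.sum_mul]
          exact Finset.sum_congr rfl fun x _ => (mul_assoc _ _ _).symm
      _ = ∑ j, π j * P j y := by simp only [ih]
      _ = ∑ j, π y * P y j := by simp_rw [hrev]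
      _ = π y := by rw [← Finset.mul_sum, hP.2, mul_one]

lemma myKey (π : X → ℝ) (P : Matrix X X ℝ) (hP : IsTransMat P)
    (hrev : ∀ x y, π x * P x y = π y * P y x) (hπ1 : ∑ x, π x = 1)
    (s t : ℕ) (x w : X) :
    (P ^ (s + t)) x w - π w = ∑ y, ((P ^ s) x y - π y) * ((P ^ t) y w - π w) := by
  have h1 : ∑ y, (P ^ s) x y * (P ^ t) y w = (P ^ (s + t)) x w := by
    rw [pow_add, Matrix.mul_apply]
  have h2 : ∑ y, (P ^ s) x y = 1 := myPow_rowsum P hP s x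
  have h3 : ∑ y, π y * (P ^ t) y w = π w := myStat π P hP hrev t w
  have hexp : ∀ y : X, ((P ^ s) x y - π y) * ((P ^ t) y w - π w)
      = (P ^ s) x y * (P ^ t) y w - (P ^ s) x y * π w
        - π y * (P ^ t) y w + π y * π w := by intro y; ring
  rw [Finset.sum_congr rfl fun y _ => hexp y]
  rw [Finset.sum_add_distrib, Finset.sum_sub_distrib, Finset.sum_sub_distrib,
    ← Finset.sum_mul, ← Finset.sum_mul, h1, h2, h3, hπ1]
  ring

end aux

/-- Comparison between the π-weighted and the worst-case total variation mixing times of a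
reversible chain. -/
theorem stmt19 {X : Type*} [Fintype X] [DecidableEq X] [Nonempty X]
    (hcard : 1 < Fintype.card X)
    (π : X → ℝ) (hπ : ∀ x, 0 < π x) (hπ1 : ∑ x, π x = 1)
    (P : Matrix X X ℝ) (hP : IsTransMat P)
    (hrev : ∀ x y, π x * P x y = π y * P y x)
    (lstar : ℝ)
    (hlstar : lstar = sSup {r : ℝ | ∃ μ : ℂ, μ ≠ 1 ∧ IsEigenvalueC P μ ∧ r = ‖μ‖})
    (hls : lstar < 1)
    (gstar : ℝ) (hgstar : gstar = 1 - lstar)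
    (pimin : ℝ) (hpimin : pimin = Finset.univ.inf' Finset.univ_nonempty π)
    (ε : ℝ) (hε : 0 < ε) (hε' : ε < pimin ^ 3 / 4)
    (tbar : ℕ)
    (htbar : tbar = sInf {t : ℕ | 0 < t ∧
      (1 / 2) * ∑ x, ∑ y, π x * |(P ^ t) x y - π y| < ε})
    (tmix : ℕ)
    (htmix : tmix = sInf {t : ℕ | 0 < t ∧
      (Finset.univ.sup' Finset.univ_nonempty fun x =>
        (1 / 2) * ∑ y, |(P ^ t) x y - π y|) < ε}) :
    (1 - gstar) / 2 * (tmix : ℝ) ≤ (tbar : ℝ) ∧ tbar ≤ tmix := by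
  set Sb : Set ℕ := {t : ℕ | 0 < t ∧
      (1 / 2) * ∑ x, ∑ y, π x * |(P ^ t) x y - π y| < ε} with hSbdef
  set Sm : Set ℕ := {t : ℕ | 0 < t ∧
      (Finset.univ.sup' Finset.univ_nonempty fun x =>
        (1 / 2) * ∑ y, |(P ^ t) x y - π y|) < ε} with hSmdef
  -- basic facts about pimin
  have hpimin_le : ∀ x, pimin ≤ π x := fun x => by
    rw [hpimin]; exact Finset.inf'_le _ (mem_univ x)
  have hpimin_pos : 0 < pimin := by
    rw [hpimin]; exact (Finset.lt_inf'_iff _).mpr fun x _ => hπ x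
  have hpimin_half : pimin ≤ 1 / 2 := by
    obtain ⟨a, b, hab⟩ := Fintype.exists_pair_of_one_lt_card hcard
    have hsum : π a + π b ≤ 1 := by
      rw [← hπ1, ← Finset.sum_pair hab]
      exact Finset.sum_le_sum_of_subset_of_nonneg (Finset.subset_univ _)
        (fun x _ _ => (hπ x).le)
    have := hpimin_le a; have := hpimin_le b; linarith
  have hεsq : 2 * ε < pimin ^ 2 := by nlinarith
  -- the per-state weighted distance
  -- rearrangement: weighted sum equals ∑ π x * d x
  have hrearr : ∀ t : ℕ, (1 / 2) * ∑ x, ∑ y, π x * |(P ^ t) x y - π y|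
      = ∑ x, π x * ((1 / 2) * ∑ y, |(P ^ t) x y - π y|) := by
    intro t
    rw [Finset.mul_sum]
    refine Finset.sum_congr rfl fun x _ => ?_
    rw [Finset.mul_sum, Finset.mul_sum, Finset.mul_sum]
    exact Finset.sum_congr rfl fun y _ => by ring
  have hdnonneg : ∀ (t : ℕ) (x : X), 0 ≤ (1 / 2) * ∑ y, |(P ^ t) x y - π y| := by
    intro t x; positivity
  -- Sm ⊆ Sb
  have hsub : Sm ⊆ Sb := by
    rintro t ⟨ht0, htε⟩
    refine ⟨ht0, ?_⟩
    rw [hrearr t]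
    calc ∑ x, π x * ((1 / 2) * ∑ y, |(P ^ t) x y - π y|)
        ≤ ∑ x, π x * (Finset.univ.sup' Finset.univ_nonempty fun x =>
            (1 / 2) * ∑ y, |(P ^ t) x y - π y|) := by
          refine Finset.sum_le_sum fun x _ => ?_
          exact mul_le_mul_of_nonneg_left (Finset.le_sup' (fun x => (1 / 2) * ∑ y, |(P ^ t) x y - π y|) (mem_univ x)) (hπ x).le
      _ = Finset.univ.sup' Finset.univ_nonempty fun x =>
            (1 / 2) * ∑ y, |(P ^ t) x y - π y| := by rw [← Finset.sum_mul, hπ1, one_mul]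
      _ < ε := htε
  -- main doubling step : t ∈ Sb → 2*t ∈ Sm
  have hdouble : ∀ t ∈ Sb, 2 * t ∈ Sm := by
    rintro t ⟨ht0, htε⟩
    have hdlt : ∀ y : X, (1 / 2) * ∑ w, |(P ^ t) y w - π w| < ε / pimin := by
      intro y
      set d : X → ℝ := fun z => (1 / 2) * ∑ w, |(P ^ t) z w - π w| with hd
      have h1 : π y * d y ≤ ∑ z, π z * d z :=
        Finset.single_le_sum (fun z _ => mul_nonneg (hπ z).le (hdnonneg t z)) (mem_univ y)
      have h2 : ∑ z, π z * d z < ε := by rw [← hrearr t]; exact htε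
      have h3 : pimin * d y ≤ π y * d y :=
        mul_le_mul_of_nonneg_right (hpimin_le y) (hdnonneg t y)
      rw [lt_div_iff₀ hpimin_pos]
      calc d y * pimin = pimin * d y := by ring
        _ < ε := by linarith
    refine ⟨by omega, ?_⟩
    rw [Finset.sup'_lt_iff]
    intro x _
    have hA : (1 / 2) * ∑ w, |(P ^ (2 * t)) x w - π w|
        ≤ ∑ y, |(P ^ t) x y - π y| * ((1 / 2) * ∑ w, |(P ^ t) y w - π w|) := by
      have hkey : ∀ w : X, (P ^ (2 * t)) x w - π w
          = ∑ y, ((P ^ t) x y - π y) * ((P ^ t) y w - π w) := by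
        intro w
        have := myKey π P hP hrev hπ1 t t x w
        rwa [show t + t = 2 * t by ring] at this
      calc (1 / 2) * ∑ w, |(P ^ (2 * t)) x w - π w|
          ≤ (1 / 2) * ∑ w, ∑ y, |(P ^ t) x y - π y| * |(P ^ t) y w - π w| := by
            refine mul_le_mul_of_nonneg_left (Finset.sum_le_sum fun w _ => ?_) (by norm_num)
            rw [hkey w]
            refine (Finset.abs_sum_le_sum_abs _ _).trans ?_
            exact le_of_eq (Finset.sum_congr rfl fun y _ => abs_mul _ _)
        _ = ∑ y, |(P ^ t) x y - π y| * ((1 / 2) * ∑ w, |(P ^ t) y w - π w|) := by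
            rw [Finset.sum_comm, Finset.mul_sum]
            refine Finset.sum_congr rfl fun y _ => ?_
            rw [← Finset.mul_sum]; ring
    have hB : ∑ y, |(P ^ t) x y - π y| * ((1 / 2) * ∑ w, |(P ^ t) y w - π w|)
        ≤ (∑ y, |(P ^ t) x y - π y|) * (ε / pimin) := by
      rw [Finset.sum_mul]
      exact Finset.sum_le_sum fun y _ =>
        mul_le_mul_of_nonneg_left (hdlt y).le (abs_nonneg _)
    have hC : ∑ y, |(P ^ t) x y - π y| = 2 * ((1 / 2) * ∑ y, |(P ^ t) x y - π y|) := by ring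
    have hdx : (1 / 2) * ∑ y, |(P ^ t) x y - π y| < ε / pimin := hdlt x
    have hpos : 0 < ε / pimin := div_pos hε hpimin_pos
    have hD : (∑ y, |(P ^ t) x y - π y|) * (ε / pimin)
        < 2 * (ε / pimin) * (ε / pimin) := by
      rw [hC]
      have := mul_lt_mul_of_pos_right hdx (show (0:ℝ) < 2 * (ε / pimin) by linarith)
      nlinarith
    have hE : 2 * (ε / pimin) * (ε / pimin) < ε := by
      have heq : 2 * (ε / pimin) * (ε / pimin) = 2 * ε ^ 2 / pimin ^ 2 := by
        field_simp
      rw [heq, div_lt_iff₀ (by positivity)]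
      nlinarith
    calc (1 / 2) * ∑ w, |(P ^ (2 * t)) x w - π w|
        ≤ (∑ y, |(P ^ t) x y - π y|) * (ε / pimin) := hA.trans hB
      _ < ε := hD.trans hE
  -- assemble
  by_cases hSb : Sb.Nonempty
  · have htb_mem : tbar ∈ Sb := by rw [htbar]; exact Nat.sInf_mem hSb
    have h2t : 2 * tbar ∈ Sm := hdouble _ htb_mem
    have hSm : Sm.Nonempty := ⟨_, h2t⟩
    have htm_mem : tmix ∈ Sm := by rw [htmix]; exact Nat.sInf_mem hSm
    have h1 : tbar ≤ tmix := by rw [htbar]; exact Nat.sInf_le (hsub htm_mem)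
    have h2 : tmix ≤ 2 * tbar := by rw [htmix]; exact Nat.sInf_le h2t
    refine ⟨?_, h1⟩
    have h2' : (tmix : ℝ) ≤ 2 * (tbar : ℝ) := by exact_mod_cast h2
    have hnn : (0:ℝ) ≤ (tmix : ℝ) := Nat.cast_nonneg _
    rw [hgstar]
    nlinarith [mul_nonneg (by linarith : (0:ℝ) ≤ 1 - lstar) hnn]
  · have hSm : ¬ Sm.Nonempty := fun ⟨t, ht⟩ => hSb ⟨t, hsub ht⟩
    have hb0 : tbar = 0 := by
      rw [htbar]
      exact Nat.sInf_eq_zero.mpr (Or.inr (Set.not_nonempty_iff_eq_empty.mp hSb))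
    have hm0 : tmix = 0 := by
      rw [htmix]
      exact Nat.sInf_eq_zero.mpr (Or.inr (Set.not_nonempty_iff_eq_empty.mp hSm))
    rw [hb0, hm0]
    simp
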